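/- Let 𝔡 be a finite-dimensional Lie algebra with invariant β ∈ S²𝔡, and suppose β is non-degenerate (so it defines a non-degenerate invariant metric on 𝔡 via β^♯ : 𝔡* ≅ 𝔡) and 𝔤 ⊆ 𝔡 is a Lie subalgebra that is Lagrangian with respect to this metric. Then the reduction (𝔮, 𝔤) of (𝔡 ⋉ 𝔡*_β, 𝔤 ⋉ 𝔡*_β) is canonically isomorphic to (𝔡, 𝔤): the map f : 𝔮 → 𝔡 is an isometric Lie algebra isomorphism restricting to the identity on 𝔤. -/
import Mathlib


open Module LieAlgebra

/-- `x` lies in the β̂-orthogonal `𝔠^⊥` of `𝔠 = 𝔤 ⋉ 𝔡*_β = {y | y.1 ∈ G}`. -/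
def InCperp {K D : Type*} [Field K] [AddCommGroup D] [Module K D]
    (G : Submodule K D)
    (hatβ : (D × Module.Dual K D) → (D × Module.Dual K D) → K)
    (x : D × Module.Dual K D) : Prop :=
  ∀ y : D × Module.Dual K D, y.1 ∈ G → hatβ x y = 0

/-- If `β` is non-degenerate (i.e. `β^♯ = Bs` is bijective) and `𝔤` is a Lagrangian
Lie subalgebra (`𝔤 = β^♯(ann 𝔤)`), then the reduction `(𝔮, 𝔤)` of
`(𝔡 ⋉ 𝔡*_β, 𝔤 ⋉ 𝔡*_β)` is canonically isomorphic to `(𝔡, 𝔤)`: the induced map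
`f : 𝔮 = 𝔠/𝔠^⊥ → 𝔡`, given on representatives by `f̂(ξ,μ) = ξ + β^♯(μ)`, is an
isometric Lie algebra isomorphism restricting to the identity on `𝔤`.
All assertions about the quotient are phrased at the level of representatives. -/
theorem reduction_exact_case {K D : Type*} [Field K]
    [LieRing D] [LieAlgebra K D] [FiniteDimensional K D]
    (Bs : Module.Dual K D →ₗ[K] D)
    (hsymm : ∀ μ ν : Module.Dual K D, μ (Bs ν) = ν (Bs μ))
    (hinv : ∀ (ξ : D) (μ : Module.Dual K D),
      Bs (μ ∘ₗ LieAlgebra.ad K D ξ) = -⁅ξ, Bs μ⁆)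
    (hBsbij : Function.Bijective Bs)
    (br : Module.Dual K D → Module.Dual K D → Module.Dual K D)
    (hbr : ∀ (μ₁ μ₂ : Module.Dual K D) (ξ : D), br μ₁ μ₂ ξ = μ₂ ⁅ξ, Bs μ₁⁆)
    (Br : (D × Module.Dual K D) → (D × Module.Dual K D) → (D × Module.Dual K D))
    (hBr : ∀ x y : D × Module.Dual K D,
      Br x y = (⁅x.1, y.1⁆,
        -(y.2 ∘ₗ LieAlgebra.ad K D x.1) + (x.2 ∘ₗ LieAlgebra.ad K D y.1)
          + br x.2 y.2))
    (hatβ : (D × Module.Dual K D) → (D × Module.Dual K D) → K)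
    (hβ : ∀ x y : D × Module.Dual K D,
      hatβ x y = x.2 (Bs y.2) + x.2 y.1 + y.2 x.1)
    (G : Submodule K D)
    (hG : ∀ x ∈ G, ∀ y ∈ G, ⁅x, y⁆ ∈ G)
    (hGLag : ∀ ζ : D, ζ ∈ G ↔ ∃ μ ∈ G.dualAnnihilator, Bs μ = ζ)
    (fhat : (D × Module.Dual K D) → D)
    (hfhat : ∀ x, fhat x = x.1 + Bs x.2) :
    -- f is surjective onto 𝔡
    (∀ ζ : D, ∃ x : D × Module.Dual K D, x.1 ∈ G ∧ fhat x = ζ) ∧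
    -- f is injective on 𝔮 = 𝔠/𝔠^⊥: its kernel on 𝔠 is exactly 𝔠^⊥
    (∀ x : D × Module.Dual K D, x.1 ∈ G → (fhat x = 0 ↔ InCperp G hatβ x)) ∧
    -- f is isometric: the induced metric on 𝔮 corresponds to β⁻¹ on 𝔡
    (∀ x y : D × Module.Dual K D, x.1 ∈ G → y.1 ∈ G →
      ∀ μ : Module.Dual K D, Bs μ = fhat x → hatβ x y = μ (fhat y)) ∧
    -- f is a Lie algebra homomorphism
    (∀ x y : D × Module.Dual K D, fhat (Br x y) = ⁅fhat x, fhat y⁆) ∧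
    -- f restricts to the identity on 𝔤
    (∀ ξ : D, ξ ∈ G → fhat (ξ, (0 : Module.Dual K D)) = ξ) := by

  have hann : ∀ ν : Module.Dual K D, Bs ν ∈ G → ν ∈ G.dualAnnihilator := by
    intro ν hν
    obtain ⟨μ, hμ, hμν⟩ := (hGLag (Bs ν)).1 hν
    rwa [hBsbij.1 hμν] at hμ
  refine ⟨?_, ?_, ?_, ?_, ?_⟩
  · intro ζ
    obtain ⟨μ, hμ⟩ := hBsbij.2 ζ
    exact ⟨(0, μ), G.zero_mem, by simp [hfhat, hμ]⟩
  · intro x hx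
    constructor
    · intro h y hy
      rw [hfhat] at h
      have hx1 : x.1 = -(Bs x.2) := eq_neg_of_add_eq_zero_left h
      have hxann : (-x.2) ∈ G.dualAnnihilator := by
        apply hann
        rw [map_neg, ← hx1]; exact hx
      have h1 : x.2 y.1 = 0 := by
        have := (Submodule.mem_dualAnnihilator _).1 hxann y.1 hy
        simpa using this
      have h2 : y.2 x.1 = -(x.2 (Bs y.2)) := by
        rw [hx1, map_neg, hsymm]
      rw [hβ, h1, h2]; ring
    · intro h
      rw [← Module.forall_dual_apply_eq_zero_iff K (fhat x)]
      intro ν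
      have := h (0, ν) G.zero_mem
      rw [hβ] at this
      simp only [map_zero] at this
      have hs := hsymm x.2 ν
      rw [hfhat, map_add]
      linear_combination this - hs
  · intro x y hx hy μ hμ
    have hμann : μ - x.2 ∈ G.dualAnnihilator := by
      apply hann
      rw [map_sub, hμ, hfhat, add_sub_cancel_right]; exact hx
    have h1 : μ y.1 - x.2 y.1 = 0 := by
      have := (Submodule.mem_dualAnnihilator _).1 hμann y.1 hy
      simpa using this
    have h2 : μ (Bs y.2) = y.2 (Bs μ) := hsymm _ _
    rw [hβ, hfhat, map_add, h2, hμ, hfhat, map_add]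
    linear_combination hsymm x.2 y.2 - h1
  · intro x y
    have hbr' : br x.2 y.2 = -(y.2 ∘ₗ LieAlgebra.ad K D (Bs x.2)) := by
      ext ξ
      simp only [LinearMap.neg_apply, LinearMap.coe_comp, Function.comp_apply,
        LieAlgebra.ad_apply, hbr]
      rw [← lie_skew, map_neg]
    rw [hfhat, hBr, hfhat, hfhat]
    simp only [map_add, map_neg, hbr', hinv, neg_neg]
    rw [lie_add, add_lie, add_lie]
    have h3 : ⁅Bs x.2, y.1⁆ = -⁅y.1, Bs x.2⁆ := (lie_skew _ _).symm
    rw [h3]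
    abel
  · intro ξ hξ
    simp [hfhat]
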